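/- Let k be a finite field with q elements, k_f its degree-f extension, e | q^f − 1, and ξ ∈ k_f^×. Let d be the order of the image of ξ^{q−1} in k_f^×/(k_f^×)^e. Then the smallest multiple f' of f such that ξ^{q−1} becomes an e-th power in the degree-f' extension k_{f'} of k is f' = d·f. -/

import Mathlib

/-- Inside the algebraic closure `Ω` of the finite field `k` of cardinality `q`, the subgroup
`{x ∈ Ωˣ | x^(q^m - 1) = 1}`, i.e. the multiplicative group of the degree-`m` extension
`k_m` of `k`. -/
noncomputable def stmt9Subfield (k : Type*) [Field k] (N : ℕ) : Subgroup (AlgebraicClosure k)ˣ :=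
  (powMonoidHom N : (AlgebraicClosure k)ˣ →* (AlgebraicClosure k)ˣ).ker

open Finset in
lemma aux_geom (a : ℕ) (ha : 1 ≤ a) (s : ℕ) :
    a ^ s - 1 = (a - 1) * ∑ i ∈ Finset.range s, a ^ i := by
  induction s with
  | zero => simp
  | succ n ih =>
    rw [Finset.sum_range_succ, Nat.mul_add, ← ih, pow_succ]
    have h1 : 1 ≤ a ^ n := Nat.one_le_pow _ _ ha
    have h2 : (a - 1) * a ^ n = a * a ^ n - a ^ n := by rw [Nat.sub_mul, one_mul]
    have h3 : a ^ n * a = a * a ^ n := mul_comm _ _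
    have h4 : a ^ n ≤ a * a ^ n := Nat.le_mul_of_pos_left _ ha
    omega

lemma aux_dvd_mul {t c : ℕ} (hc : 0 < c) (ht : 0 < t) (s : ℕ) :
    t ∣ s * c ↔ t / Nat.gcd t c ∣ s := by
  set g := Nat.gcd t c with hg
  have hg0 : 0 < g := Nat.gcd_pos_of_pos_left _ ht
  obtain ⟨t', ht'⟩ := Nat.gcd_dvd_left t c
  obtain ⟨c', hc'⟩ := Nat.gcd_dvd_right t c
  have htg : t / g = t' := by rw [ht', Nat.mul_div_cancel_left _ hg0]
  have hcg : c / g = c' := by rw [hc', Nat.mul_div_cancel_left _ hg0]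
  have hcop : Nat.Coprime t' c' := by
    have := Nat.coprime_div_gcd_div_gcd (m := t) (n := c) hg0
    rwa [← hg, htg, hcg] at this
  rw [htg]
  constructor
  · intro h
    have h2 : g * t' ∣ g * (s * c') := by
      rw [← ht']
      have : s * c = g * (s * c') := by rw [hc']; ring
      rwa [this] at h
    exact hcop.dvd_of_dvd_mul_right ((Nat.mul_dvd_mul_iff_left hg0).mp h2)
  · intro h
    obtain ⟨u, rfl⟩ := h
    rw [← hg] at ht' hc'
    refine ⟨u * c', ?_⟩
    calc t' * u * c = t' * u * (g * c') := by rw [← hc']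
      _ = g * t' * (u * c') := by ring
      _ = t * (u * c') := by rw [← ht']

lemma aux_sum_mod {d a : ℕ} (ha : 1 ≤ a) (h : d ∣ a - 1) (s : ℕ) :
    (d ∣ ∑ i ∈ Finset.range s, a ^ i) ↔ d ∣ s := by
  have ha' : (a : ZMod d) = 1 := by
    have h0 := (ZMod.natCast_eq_zero_iff _ _).mpr h
    rw [Nat.cast_sub ha] at h0
    rw [sub_eq_zero] at h0
    simpa using h0
  rw [← ZMod.natCast_eq_zero_iff, ← ZMod.natCast_eq_zero_iff s d,
    Nat.cast_sum]
  simp [ha']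

lemma aux_root {Ω : Type*} [Field Ω] [IsAlgClosed Ω] {n e : ℕ} (hn : 0 < n)
    (hΩ : (n : Ω) ≠ 0) (he : e ∣ n) {z : Ωˣ} (hz : z ^ n = 1) :
    (∃ y : Ωˣ, y ^ n = 1 ∧ y ^ e = z) ↔ z ^ (n / e) = 1 := by
  have he0 : 0 < e := Nat.pos_of_dvd_of_pos he hn
  constructor
  · rintro ⟨y, hy1, rfl⟩
    rw [← pow_mul, Nat.mul_div_cancel' he, hy1]
  · intro h
    haveI : NeZero (n : Ω) := ⟨hΩ⟩
    haveI : NeZero n := ⟨hn.ne'⟩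
    obtain ⟨ζ₀, hζ₀⟩ := HasEnoughRootsOfUnity.exists_primitiveRoot Ω n
    have hζ : IsPrimitiveRoot ((hζ₀.isUnit hn.ne').unit) n := hζ₀.isUnit_unit hn.ne'
    set ζ := (hζ₀.isUnit hn.ne').unit with hζdef
    have hzmem : z ∈ Subgroup.zpowers ζ := by
      rw [hζ.zpowers_eq]
      exact (mem_rootsOfUnity n z).mpr hz
    obtain ⟨b, hb⟩ := Subgroup.mem_zpowers_iff.mp hzmem
    have hdvd : (n : ℤ) ∣ b * ((n / e : ℕ) : ℤ) := by
      rw [← hζ.zpow_eq_one_iff_dvd, zpow_mul, hb, zpow_natCast, h]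
    have hne : (0 : ℤ) < ((n / e : ℕ) : ℤ) := by
      exact_mod_cast Nat.div_pos (Nat.le_of_dvd hn he) he0
    have heb : (e : ℤ) ∣ b := by
      have hn' : (n : ℤ) = (e : ℤ) * ((n / e : ℕ) : ℤ) := by
        exact_mod_cast (Nat.mul_div_cancel' he).symm
      rw [hn'] at hdvd
      exact (mul_dvd_mul_iff_right hne.ne').mp hdvd
    obtain ⟨c, hc⟩ := heb
    refine ⟨ζ ^ c, ?_, ?_⟩
    · rw [← zpow_natCast, ← zpow_mul, hζ.zpow_eq_one_iff_dvd]
      exact dvd_mul_left _ _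
    · rw [← zpow_natCast, ← zpow_mul, mul_comm c (e : ℤ), ← hc, hb]

/-- **Smallest extension where `ξ^(q-1)` becomes an `e`-th power.**  Let `k` be a finite field
with `q` elements, `k_f` its degree-`f` extension (realised inside an algebraic closure `Ω`
of `k` as `{x | x^(q^f) = x}`), `e ∣ q^f - 1`, and `ξ ∈ k_fˣ`.  Let `d` be the order of the
image of `ξ^(q-1)` in `k_fˣ/(k_fˣ)^e`.  Then the smallest (positive) multiple `f'` of `f`
such that `ξ^(q-1)` is an `e`-th power in the degree-`f'` extension `k_{f'}` of `k` is
`f' = d·f`. -/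
theorem stmt_9 (k : Type*) [Field k] [Fintype k] (q f e : ℕ)
    (hq : Fintype.card k = q) (hf : 0 < f) (he : 0 < e) (hef : e ∣ q ^ f - 1)
    (ξ : (AlgebraicClosure k)ˣ) (hξ : ξ ^ (q ^ f - 1) = 1)
    (ξK : stmt9Subfield k (q ^ f - 1)) (hξK : (ξK : (AlgebraicClosure k)ˣ) = ξ)
    (d : ℕ)
    (hd : d = orderOf (QuotientGroup.mk (ξK ^ (q - 1)) :
      (stmt9Subfield k (q ^ f - 1)) ⧸
        (powMonoidHom e : (stmt9Subfield k (q ^ f - 1)) →* _).range)) :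
    IsLeast {m : ℕ | 0 < m ∧ f ∣ m ∧
      ∃ y : (AlgebraicClosure k)ˣ, y ^ (q ^ m - 1) = 1 ∧ y ^ e = ξ ^ (q - 1)} (d * f) := by
  classical
  have hq2 : 2 ≤ q := hq ▸ Fintype.one_lt_card
  have hq0 : ((q : ℕ) : AlgebraicClosure k) = 0 := by
    have h1 : ((q : ℕ) : k) = 0 := by rw [← hq]; exact FiniteField.cast_card_eq_zero k
    rw [← map_natCast (algebraMap k (AlgebraicClosure k)), h1, map_zero]
  have hcast : ∀ m : ℕ, 0 < m → ((q ^ m - 1 : ℕ) : AlgebraicClosure k) ≠ 0 := by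
    intro m hm
    have h1 : 1 ≤ q ^ m := Nat.one_le_pow _ _ (by omega)
    rw [Nat.cast_sub h1, Nat.cast_pow, hq0, zero_pow hm.ne', zero_sub]
    simpa using (one_ne_zero (α := AlgebraicClosure k))
  have hpow2 : ∀ m : ℕ, 0 < m → 2 ≤ q ^ m := fun m hm =>
    le_trans hq2 (Nat.le_self_pow hm.ne' q)
  have hn₁pos : 0 < q ^ f - 1 := by have := hpow2 f hf; omega
  set z := ξ ^ (q - 1) with hzdef
  have hz1 : z ^ (q ^ f - 1) = 1 := by
    rw [hzdef, ← pow_mul, mul_comm, pow_mul, hξ, one_pow]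
  set t := orderOf z with htdef
  have ht : t ∣ q ^ f - 1 := orderOf_dvd_of_pow_eq_one hz1
  have htpos : 0 < t := Nat.pos_of_dvd_of_pos ht hn₁pos
  set c₁ := (q ^ f - 1) / e with hc₁
  have hc₁pos : 0 < c₁ := Nat.div_pos (Nat.le_of_dvd hn₁pos hef) he
  set D := t / Nat.gcd t c₁ with hD
  have hDpos : 0 < D := Nat.div_pos (Nat.gcd_le_left _ htpos) (Nat.gcd_pos_of_pos_left _ htpos)
  have hDt : D ∣ t := Nat.div_dvd_of_dvd (Nat.gcd_dvd_left _ _)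
  have hDn₁ : D ∣ q ^ f - 1 := hDt.trans ht
  -- criterion for membership over degree f*s extensions
  have keyA : ∀ s : ℕ, 0 < s →
      ((∃ y : (AlgebraicClosure k)ˣ, y ^ (q ^ (f * s) - 1) = 1 ∧ y ^ e = z) ↔ D ∣ s) := by
    intro s hs
    have hr : q ^ (f * s) - 1 = (q ^ f - 1) * ∑ i ∈ Finset.range s, (q ^ f) ^ i := by
      rw [pow_mul, aux_geom (q ^ f) (by have := hpow2 f hf; omega) s]
    have hnpos : 0 < q ^ (f * s) - 1 := by
      have := hpow2 (f * s) (Nat.mul_pos hf hs); omega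
    have hz2 : z ^ (q ^ (f * s) - 1) = 1 := by rw [hr, pow_mul, hz1, one_pow]
    have hen : e ∣ q ^ (f * s) - 1 := hef.trans ⟨_, hr⟩
    rw [aux_root hnpos (hcast _ (Nat.mul_pos hf hs)) hen hz2]
    have hne : (q ^ (f * s) - 1) / e = (∑ i ∈ Finset.range s, (q ^ f) ^ i) * c₁ := by
      rw [hr, mul_comm (q ^ f - 1), Nat.mul_div_assoc _ hef]
    rw [hne, ← orderOf_dvd_iff_pow_eq_one, ← htdef, aux_dvd_mul hc₁pos htpos, ← hD]
    exact aux_sum_mod (by have := hpow2 f hf; omega) hDn₁ s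
  -- membership in the subgroup
  have hmemG : ∀ w : (AlgebraicClosure k)ˣ,
      w ∈ stmt9Subfield k (q ^ f - 1) ↔ w ^ (q ^ f - 1) = 1 := by
    intro w
    rw [stmt9Subfield, MonoidHom.mem_ker, powMonoidHom_apply]
  have hx : ∀ s : ℕ, (((ξK ^ (q - 1)) ^ s : stmt9Subfield k (q ^ f - 1)) :
      (AlgebraicClosure k)ˣ) = z ^ s := by
    intro s
    rw [hzdef]
    simp [hξK]
  -- d = D
  have hdD : d = D := by
    rw [hd]
    have hmem : ∀ s : ℕ, ((QuotientGroup.mk (ξK ^ (q - 1)) :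
        (stmt9Subfield k (q ^ f - 1)) ⧸
          (powMonoidHom e : (stmt9Subfield k (q ^ f - 1)) →* _).range) ^ s = 1 ↔ D ∣ s) := by
      intro s
      rw [← QuotientGroup.mk_pow, QuotientGroup.eq_one_iff, MonoidHom.mem_range]
      have hstep : (∃ w : stmt9Subfield k (q ^ f - 1),
          powMonoidHom e w = (ξK ^ (q - 1)) ^ s) ↔
          (∃ y : (AlgebraicClosure k)ˣ, y ^ (q ^ f - 1) = 1 ∧ y ^ e = z ^ s) := by
        constructor
        · rintro ⟨w, hw⟩
          refine ⟨(w : (AlgebraicClosure k)ˣ), (hmemG _).mp w.2, ?_⟩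
          have h := congrArg
            (fun u : stmt9Subfield k (q ^ f - 1) => (u : (AlgebraicClosure k)ˣ)) hw
          simpa [powMonoidHom_apply, hx s] using h
        · rintro ⟨y, hy1, hy2⟩
          refine ⟨⟨y, (hmemG _).mpr hy1⟩, ?_⟩
          apply Subtype.ext
          simpa [powMonoidHom_apply, hx s] using hy2
      rw [hstep]
      have hzs : (z ^ s) ^ (q ^ f - 1) = 1 := by
        rw [← pow_mul, mul_comm, pow_mul, hz1, one_pow]
      rw [aux_root hn₁pos (hcast f hf) hef hzs, ← hc₁, ← pow_mul,
        ← orderOf_dvd_iff_pow_eq_one, ← htdef, aux_dvd_mul hc₁pos htpos, ← hD]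
    have h1 := (hmem D).mpr dvd_rfl
    have h2 := (hmem _).mp (pow_orderOf_eq_one _)
    exact Nat.dvd_antisymm (orderOf_dvd_of_pow_eq_one h1) h2
  constructor
  · refine ⟨Nat.mul_pos (hdD ▸ hDpos) hf, dvd_mul_left f d, ?_⟩
    have := (keyA d (hdD ▸ hDpos)).mpr (hdD ▸ dvd_rfl)
    rwa [mul_comm d f]
  · rintro m ⟨hm, ⟨s, rfl⟩, hy⟩
    have hs : 0 < s := by
      rcases Nat.eq_zero_or_pos s with rfl | h
      · simp at hm
      · exact h
    have hDs : D ∣ s := (keyA s hs).mp hy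
    calc d * f = D * f := by rw [hdD]
      _ ≤ s * f := Nat.mul_le_mul_right f (Nat.le_of_dvd hs hDs)
      _ = f * s := mul_comm _ _
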